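/- arXiv:math/0011188 — 2 statements merged into one kernel-verified Lean document; each statement's English description precedes it below -/
import Mathlib

section
/- Let (Ω, μ) be a probability space, X, Y : Ω → ℝ integrable, t ∈ ℝ, δ > 0, and η ≥ 0. Suppose E|X − t| ≤ e + η, E|Y − t| ≤ e + η, and E|(X + Y)/2 − t| ≥ e − η for some real e. Then μ{ω : X(ω) ≥ t + δ and Y(ω) ≤ t − δ} ≤ 2η/δ. -/
open MeasureTheory

/-- Measure-theoretic core of Subclaim 3 of the Main Lemma. -/
theorem straddle_event_small
    {Ω : Type*} [MeasurableSpace Ω] (μ : Measure Ω) [IsProbabilityMeasure μ]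
    (X Y : Ω → ℝ) (hXm : Measurable X) (hYm : Measurable Y)
    (hXi : Integrable X μ) (hYi : Integrable Y μ)
    (t δ η e : ℝ) (hδ : 0 < δ) (hη : 0 ≤ η)
    (hX : ∫ ω, |X ω - t| ∂μ ≤ e + η)
    (hY : ∫ ω, |Y ω - t| ∂μ ≤ e + η)
    (hXY : ∫ ω, |(X ω + Y ω)/2 - t| ∂μ ≥ e - η) :
    μ {ω | X ω ≥ t + δ ∧ Y ω ≤ t - δ} ≤ ENNReal.ofReal (2 * η / δ) := by
  set g : Ω → ℝ := fun ω => |X ω - t| / 2 + |Y ω - t| / 2 - |(X ω + Y ω)/2 - t| with hg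
  have hXti : Integrable (fun ω => |X ω - t|) μ := ((hXi.sub (integrable_const t)).abs)
  have hYti : Integrable (fun ω => |Y ω - t|) μ := ((hYi.sub (integrable_const t)).abs)
  have hMi : Integrable (fun ω => |(X ω + Y ω)/2 - t|) μ :=
    ((((hXi.add hYi).div_const 2).sub (integrable_const t)).abs)
  have hgi : Integrable g μ := ((hXti.div_const 2).add (hYti.div_const 2)).sub hMi
  have hgnn : 0 ≤ᵐ[μ] g := Filter.Eventually.of_forall fun ω => by
    have : |(X ω + Y ω)/2 - t| ≤ |X ω - t| / 2 + |Y ω - t| / 2 := by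
      have h := abs_add_le (X ω - t) (Y ω - t)
      have heq : (X ω + Y ω)/2 - t = ((X ω - t) + (Y ω - t)) / 2 := by ring
      rw [heq, abs_div]
      rw [show |(2:ℝ)| = 2 by norm_num]
      linarith
    simp only [hg, Pi.zero_apply]
    linarith
  have hint : ∫ ω, g ω ∂μ ≤ 2 * η := by
    have h1 : ∫ ω, g ω ∂μ
        = (∫ ω, |X ω - t| ∂μ) / 2 + (∫ ω, |Y ω - t| ∂μ) / 2
          - ∫ ω, |(X ω + Y ω)/2 - t| ∂μ := by
      rw [show (∫ ω, g ω ∂μ)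
          = ∫ ω, (|X ω - t| / 2 + |Y ω - t| / 2 - |(X ω + Y ω)/2 - t|) ∂μ from rfl]
      have hsum : Integrable (fun ω => |X ω - t| / 2 + |Y ω - t| / 2) μ :=
        (hXti.div_const 2).add (hYti.div_const 2)
      rw [integral_sub hsum hMi]
      rw [integral_add (hXti.div_const 2) (hYti.div_const 2), integral_div, integral_div]
    linarith [h1]
  have hsub : {ω | X ω ≥ t + δ ∧ Y ω ≤ t - δ} ⊆ {ω | δ ≤ g ω} := by
    intro ω hω
    obtain ⟨h1, h2⟩ := hω
    have hx : X ω - t ≥ δ := by linarith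
    have hy : Y ω - t ≤ -δ := by linarith
    have hax : |X ω - t| = X ω - t := abs_of_nonneg (by linarith)
    have hay : |Y ω - t| = -(Y ω - t) := abs_of_nonpos (by linarith)
    have hm : |(X ω + Y ω)/2 - t| ≤ (X ω - t)/2 + (-(Y ω - t))/2 - δ := by
      rcases abs_cases ((X ω + Y ω)/2 - t) with ⟨h, _⟩ | ⟨h, _⟩ <;> rw [h] <;> nlinarith
    simp only [Set.mem_setOf_eq, hg, hax, hay]
    linarith
  have hmark := mul_meas_ge_le_integral_of_nonneg hgnn hgi δ
  have hmeas : μ {ω | X ω ≥ t + δ ∧ Y ω ≤ t - δ} ≤ μ {ω | δ ≤ g ω} :=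
    measure_mono hsub
  have hfin : μ {ω | δ ≤ g ω} ≠ ⊤ := measure_ne_top μ _
  have htr : (μ {ω | X ω ≥ t + δ ∧ Y ω ≤ t - δ}).toReal ≤ 2 * η / δ := by
    have h1 : (μ {ω | X ω ≥ t + δ ∧ Y ω ≤ t - δ}).toReal ≤ (μ {ω | δ ≤ g ω}).toReal :=
      ENNReal.toReal_mono hfin hmeas
    have h2 : (μ {ω | δ ≤ g ω}).toReal ≤ 2 * η / δ := by
      rw [le_div_iff₀ hδ]
      calc (μ {ω | δ ≤ g ω}).toReal * δ = δ * (μ {ω | δ ≤ g ω}).toReal := mul_comm _ _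
        _ ≤ ∫ ω, g ω ∂μ := hmark
        _ ≤ 2 * η := hint
    linarith
  calc μ {ω | X ω ≥ t + δ ∧ Y ω ≤ t - δ}
      = ENNReal.ofReal (μ {ω | X ω ≥ t + δ ∧ Y ω ≤ t - δ}).toReal :=
        (ENNReal.ofReal_toReal (measure_ne_top μ _)).symm
    _ ≤ ENNReal.ofReal (2 * η / δ) := ENNReal.ofReal_le_ofReal htr
end

section
/- The splitting number 𝔰 is a lower bound for the matrix chaos number χ: if F ⊆ 2^ω is a family such that for every Toeplitz matrix A some f ∈ F has A lim f undefined (i.e., F witnesses χ), then F, viewed as a family of subsets of ω via characteristic functions, is a splitting family; hence 𝔰 ≤ χ. -/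
open Filter Topology

/-- A regular (Toeplitz) matrix. -/
def IsToeplitz (A : ℕ → ℕ → ℝ) : Prop :=
  (∀ i, Summable fun j => |A i j|) ∧
  (∃ m : ℝ, ∀ i, ∑' j, |A i j| < m) ∧
  Tendsto (fun i => ∑' j, A i j) atTop (𝓝 1) ∧
  (∀ j, Tendsto (fun i => A i j) atTop (𝓝 0))

/-- `A lim f` exists. -/
def ALimExists (A : ℕ → ℕ → ℝ) (f : ℕ → ℝ) : Prop :=
  ∃ L : ℝ, Tendsto (fun i => ∑' j, A i j * f j) atTop (𝓝 L)

/-- `S` splits `X`: both `X ∩ S` and `X \ S` are infinite. -/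
def Splits (S X : Set ℕ) : Prop := (X ∩ S).Infinite ∧ (X \ S).Infinite

/-- The splitting number 𝔰. -/
noncomputable def splittingNumber : Cardinal :=
  sInf { c | ∃ S : Set (Set ℕ), Cardinal.mk S = c ∧
    ∀ X : Set ℕ, X.Infinite → ∃ s ∈ S, Splits s X }

/-- The matrix chaos number χ (for 0-1 valued sequences). -/
noncomputable def chiNumber : Cardinal :=
  sInf { c | ∃ F : Set (ℕ → ℝ), (∀ f ∈ F, ∀ n, f n = 0 ∨ f n = 1) ∧
    Cardinal.mk F = c ∧
    ∀ A : ℕ → ℕ → ℝ, IsToeplitz A → ∃ f ∈ F, ¬ ALimExists A f }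

lemma abs_tsum_le' (f : ℕ → ℝ) (hf : Summable fun j => |f j|) : |∑' j, f j| ≤ ∑' j, |f j| := by
  have h : Summable fun j => ‖f j‖ := by simpa [Real.norm_eq_abs] using hf
  simpa [Real.norm_eq_abs] using norm_tsum_le_tsum_norm h


lemma summable_tail_abs (g : ℕ → ℝ) (m : ℕ) (h : Summable fun j => |g j|) :
    Summable fun j => |g (j + m)| := (summable_nat_add_iff m).2 h

lemma osc_no_lim {g : ℕ → ℝ} {ii : ℕ → ℕ} {e : ℝ} (he : e = 1/20) (himono : StrictMono ii)
    (hev : ∀ k, ¬ Odd k → |g (ii k)| ≤ 2 * e)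
    (hod : ∀ k, Odd k → |g (ii k) - 1| ≤ 5 * e) (L : ℝ) :
    ¬ Tendsto g atTop (𝓝 L) := by
  intro hL
  have hTlim : Tendsto (fun k => g (ii k)) atTop (𝓝 L) := hL.comp himono.tendsto_atTop
  have h2k : Tendsto (fun k : ℕ => 2 * k) atTop atTop :=
    tendsto_atTop_mono (f := id) (fun k => by simp only [id_eq]; omega) tendsto_id
  have h2k1 : Tendsto (fun k : ℕ => 2 * k + 1) atTop atTop :=
    tendsto_atTop_mono (f := id) (fun k => by simp only [id_eq]; omega) tendsto_id
  have hcomp : Tendsto (fun k => g (ii (2 * k))) atTop (𝓝 L) := hTlim.comp h2k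
  have hcomp1 : Tendsto (fun k => g (ii (2 * k + 1))) atTop (𝓝 L) := hTlim.comp h2k1
  have hub : ∀ k : ℕ, (fun k => g (ii (2 * k))) k ≤ 2 * e := by
    intro k
    have hk : ¬ Odd (2 * k) := by rw [Nat.odd_iff]; omega
    exact (abs_le.mp (hev (2 * k) hk)).2
  have hlb : ∀ k : ℕ, 1 - 5 * e ≤ (fun k => g (ii (2 * k + 1))) k := by
    intro k
    have hk : Odd (2 * k + 1) := ⟨k, by omega⟩
    have := (abs_le.mp (hod (2 * k + 1) hk)).1
    simp only []
    linarith
  have hLle : L ≤ 2 * e := le_of_tendsto hcomp (Eventually.of_forall hub)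
  have hLge : 1 - 5 * e ≤ L := ge_of_tendsto hcomp1 (Eventually.of_forall hlb)
  rw [he] at hLle hLge
  linarith

set_option maxHeartbeats 4000000 in
lemma toeplitz_bad (A : ℕ → ℕ → ℝ) (hT : IsToeplitz A) :
    ∃ f : ℕ → ℝ, (∀ n, f n = 0 ∨ f n = 1) ∧ ¬ ALimExists A f := by
  classical
  obtain ⟨hsum, _hbd, hrow, hcol⟩ := hT
  set ε : ℝ := 1/20 with hεdef
  have hε : (0:ℝ) < ε := by norm_num
  have key : ∀ st : ℕ × ℕ, ∃ st2 : ℕ × ℕ, st.1 < st2.1 ∧ st.2 < st2.2 ∧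
      (∑ j ∈ Finset.range st.2, |A st2.1 j|) < ε ∧ |(∑' j, A st2.1 j) - 1| < ε ∧
      (∑' j, |A st2.1 (j + st2.2)|) < ε := by
    rintro ⟨pi, pn⟩
    have hhead : Tendsto (fun r => ∑ j ∈ Finset.range pn, |A r j|) atTop (𝓝 0) := by
      have : Tendsto (fun r => ∑ j ∈ Finset.range pn, |A r j|) atTop
          (𝓝 (∑ _j ∈ Finset.range pn, (0:ℝ))) := by
        apply tendsto_finset_sum
        intro j _
        simpa using (hcol j).abs
      simpa using this
    have h2 : Tendsto (fun r => |(∑' j, A r j) - 1|) atTop (𝓝 0) := by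
      simpa using (hrow.sub_const 1).abs
    obtain ⟨r, hr⟩ := ((eventually_gt_atTop pi).and
      ((hhead.eventually_lt_const hε).and (h2.eventually_lt_const hε))).exists
    have htail : Tendsto (fun m => ∑' j, |A r (j + m)|) atTop (𝓝 0) :=
      tendsto_sum_nat_add (fun j => |A r j|)
    obtain ⟨m, hm⟩ := ((eventually_gt_atTop pn).and (htail.eventually_lt_const hε)).exists
    exact ⟨(r, m), hr.1, hm.1, hr.2.1, hr.2.2, hm.2⟩
  choose step h1 h2 h3 h4 h5 using key
  set s : ℕ → ℕ × ℕ := fun k => step^[k] (0, 0) with hs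
  have hsucc : ∀ k, s (k + 1) = step (s k) := fun k => Function.iterate_succ_apply' step k _
  clear_value s
  clear hs
  set n : ℕ → ℕ := fun k => (s k).2 with hn
  set ii : ℕ → ℕ := fun k => (s (k + 1)).1 with hii
  have hnmono : StrictMono n := by
    apply strictMono_nat_of_lt_succ
    intro k
    have := h2 (s k)
    rw [← hsucc k] at this
    exact this
  have himono : StrictMono ii := by
    apply strictMono_nat_of_lt_succ
    intro k
    have := h1 (s (k + 1))
    rw [← hsucc (k+1)] at this
    exact this
  have hhead : ∀ k, (∑ j ∈ Finset.range (n k), |A (ii k) j|) < ε := by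
    intro k
    have := h3 (s k); rw [← hsucc k] at this; exact this
  have hrowk : ∀ k, |(∑' j, A (ii k) j) - 1| < ε := by
    intro k
    have := h4 (s k); rw [← hsucc k] at this; exact this
  have htail : ∀ k, (∑' j, |A (ii k) (j + n (k + 1))|) < ε := by
    intro k
    have := h5 (s k); rw [← hsucc k] at this
    exact this
  set f : ℕ → ℝ := fun j => if ∃ k, Odd k ∧ n k ≤ j ∧ j < n (k + 1) then 1 else 0 with hf
  have hfeq : ∀ j, f j = if ∃ k, Odd k ∧ n k ≤ j ∧ j < n (k + 1) then 1 else 0 :=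
    fun j => rfl
  have hf01 : ∀ j, f j = 0 ∨ f j = 1 := by
    intro j; rw [hfeq]; split_ifs <;> simp
  have hfabs : ∀ j, |f j| ≤ 1 := by
    intro j; rcases hf01 j with h | h <;> rw [h] <;> norm_num
  have hblock : ∀ k j, n k ≤ j → j < n (k + 1) → f j = if Odd k then 1 else 0 := by
    intro k j hj1 hj2
    rw [hfeq]
    by_cases hk : Odd k
    · simp only [hk, if_true]
      rw [if_pos ⟨k, hk, hj1, hj2⟩]
    · simp only [hk, if_false]
      rw [if_neg]
      rintro ⟨k', hk', hj1', hj2'⟩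
      have : k' = k := by
        by_contra hne
        rcases lt_or_gt_of_ne hne with h | h
        · exact absurd (le_trans (hnmono.monotone h) hj1) (not_le.2 hj2')
        · exact absurd (le_trans (hnmono.monotone h) hj1') (not_le.2 hj2)
      exact hk (this ▸ hk')
  -- summability
  have hsumf : ∀ r, Summable fun j => |A r j * f j| := by
    intro r
    apply Summable.of_nonneg_of_le (fun j => abs_nonneg _) _ (hsum r)
    intro j
    rw [abs_mul]
    exact mul_le_of_le_one_right (abs_nonneg _) (hfabs j)
  have hsAf : ∀ r, Summable fun j => A r j * f j := fun r => (hsumf r).of_abs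
  set T : ℕ → ℝ := fun k => ∑' j, A (ii k) j * f j with hTdef
  -- generic head bound
  have hheadf : ∀ k, |∑ j ∈ Finset.range (n k), A (ii k) j * f j| ≤
      ∑ j ∈ Finset.range (n k), |A (ii k) j| := by
    intro k
    calc |∑ j ∈ Finset.range (n k), A (ii k) j * f j|
        ≤ ∑ j ∈ Finset.range (n k), |A (ii k) j * f j| := Finset.abs_sum_le_sum_abs _ _
      _ ≤ ∑ j ∈ Finset.range (n k), |A (ii k) j| := by
          apply Finset.sum_le_sum
          intro j _
          rw [abs_mul]
          exact mul_le_of_le_one_right (abs_nonneg _) (hfabs j)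
  -- tail bounds
  have htailf : ∀ k, |∑' j, A (ii k) (j + n (k+1)) * f (j + n (k+1))| < ε := by
    intro k
    have hsa : Summable fun j => |A (ii k) (j + n (k+1))| :=
      summable_tail_abs (fun j => A (ii k) j) (n (k+1)) (hsum (ii k))
    have hs1 : Summable fun j => |A (ii k) (j + n (k+1)) * f (j + n (k+1))| :=
      summable_tail_abs (fun j => A (ii k) j * f j) (n (k+1)) (hsumf (ii k))
    calc |∑' j, A (ii k) (j + n (k+1)) * f (j + n (k+1))|
        ≤ ∑' j, |A (ii k) (j + n (k+1)) * f (j + n (k+1))| := abs_tsum_le' _ hs1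
      _ ≤ ∑' j, |A (ii k) (j + n (k+1))| := by
          apply Summable.tsum_le_tsum _ hs1 hsa
          intro j
          rw [abs_mul]
          exact mul_le_of_le_one_right (abs_nonneg _) (hfabs _)
      _ < ε := htail k
  have htailA : ∀ k, |∑' j, A (ii k) (j + n (k+1))| < ε := by
    intro k
    have hsa : Summable fun j => |A (ii k) (j + n (k+1))| :=
      summable_tail_abs (fun j => A (ii k) j) (n (k+1)) (hsum (ii k))
    exact lt_of_le_of_lt (abs_tsum_le' _ hsa) (htail k)
  -- splitting T k
  have hsplit : ∀ k, T k = (∑ j ∈ Finset.range (n k), A (ii k) j * f j) +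
      (∑ j ∈ Finset.Ico (n k) (n (k+1)), A (ii k) j * f j) +
      ∑' j, A (ii k) (j + n (k+1)) * f (j + n (k+1)) := by
    intro k
    have h := Summable.sum_add_tsum_nat_add (f := fun j => A (ii k) j * f j) (n (k+1)) (hsAf (ii k))
    have hr : (∑ j ∈ Finset.range (n (k+1)), A (ii k) j * f j) =
        (∑ j ∈ Finset.range (n k), A (ii k) j * f j) +
        ∑ j ∈ Finset.Ico (n k) (n (k+1)), A (ii k) j * f j := by
      rw [Finset.range_eq_Ico, Finset.range_eq_Ico]
      exact (Finset.sum_Ico_consecutive _ (Nat.zero_le _) (hnmono.monotone (Nat.le_succ k))).symm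
    rw [hTdef]
    dsimp only
    rw [← h, hr]
  have hsplitA : ∀ k, (∑' j, A (ii k) j) = (∑ j ∈ Finset.range (n k), A (ii k) j) +
      (∑ j ∈ Finset.Ico (n k) (n (k+1)), A (ii k) j) +
      ∑' j, A (ii k) (j + n (k+1)) := by
    intro k
    have hAr : Summable fun j => A (ii k) j := (hsum (ii k)).of_abs
    have h := Summable.sum_add_tsum_nat_add (f := fun j => A (ii k) j) (n (k+1)) hAr
    have hr : (∑ j ∈ Finset.range (n (k+1)), A (ii k) j) =
        (∑ j ∈ Finset.range (n k), A (ii k) j) +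
        ∑ j ∈ Finset.Ico (n k) (n (k+1)), A (ii k) j := by
      rw [Finset.range_eq_Ico, Finset.range_eq_Ico]
      exact (Finset.sum_Ico_consecutive _ (Nat.zero_le _) (hnmono.monotone (Nat.le_succ k))).symm
    rw [← h, hr]
  have hheadA : ∀ k, |∑ j ∈ Finset.range (n k), A (ii k) j| < ε := by
    intro k
    exact lt_of_le_of_lt (Finset.abs_sum_le_sum_abs _ _) (hhead k)
  -- even estimate
  have heven : ∀ k, ¬ Odd k → |T k| ≤ 2 * ε := by
    intro k hk
    have hmid : (∑ j ∈ Finset.Ico (n k) (n (k+1)), A (ii k) j * f j) = 0 := by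
      apply Finset.sum_eq_zero
      intro j hj
      rw [Finset.mem_Ico] at hj
      rw [hblock k j hj.1 hj.2, if_neg hk, mul_zero]
    have h := hsplit k
    rw [hmid] at h
    have b1 := lt_of_le_of_lt (hheadf k) (hhead k)
    have b2 := htailf k
    rw [abs_lt] at b1 b2
    rw [h]
    rw [abs_le]
    constructor <;> linarith [b1.1, b1.2, b2.1, b2.2]
  -- odd estimate
  have hodd : ∀ k, Odd k → |T k - 1| ≤ 5 * ε := by
    intro k hk
    have hmid : (∑ j ∈ Finset.Ico (n k) (n (k+1)), A (ii k) j * f j) =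
        ∑ j ∈ Finset.Ico (n k) (n (k+1)), A (ii k) j := by
      apply Finset.sum_congr rfl
      intro j hj
      rw [Finset.mem_Ico] at hj
      rw [hblock k j hj.1 hj.2, if_pos hk, mul_one]
    have h := hsplit k
    rw [hmid] at h
    have hA := hsplitA k
    have b1 := lt_of_le_of_lt (hheadf k) (hhead k)
    have b2 := htailf k
    have b3 := hheadA k
    have b4 := htailA k
    have b5 := hrowk k
    rw [abs_lt] at b1 b2 b3 b4 b5
    rw [h, abs_le]
    constructor <;> linarith [b1.1, b1.2, b2.1, b2.2, b3.1, b3.2, b4.1, b4.2, b5.1, b5.2]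
  refine ⟨f, hf01, ?_⟩
  rintro ⟨L, hL⟩
  refine osc_no_lim (g := fun r => ∑' j, A r j * f j) hεdef himono ?_ ?_ L hL
  · intro k hk
    have := heven k hk; rw [hTdef] at this; exact this
  · intro k hk
    have := hodd k hk; rw [hTdef] at this; exact this

open Classical in
lemma chi_witness_splits (F : Set (ℕ → ℝ)) (h01 : ∀ f ∈ F, ∀ n, f n = 0 ∨ f n = 1)
    (hch : ∀ A : ℕ → ℕ → ℝ, IsToeplitz A → ∃ f ∈ F, ¬ ALimExists A f)
    (X : Set ℕ) (hX : X.Infinite) : ∃ f ∈ F, Splits {n | f n = 1} X := by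
  by_contra hcon
  push_neg at hcon
  set p : ℕ → Prop := fun n => n ∈ X with hp
  have hpX : (setOf p).Infinite := hX
  set e : ℕ → ℕ := Nat.nth p with he
  have hmono : StrictMono e := Nat.nth_strictMono hpX
  have hmem : ∀ i, e i ∈ X := fun i => Nat.nth_mem_of_infinite hpX i
  set A : ℕ → ℕ → ℝ := fun i j => if j = e i then 1 else 0 with hA
  have habs : ∀ i j, |A i j| = A i j := by
    intro i j; simp only [hA]; split_ifs <;> simp
  have hsummable : ∀ i (g : ℕ → ℝ), Summable fun j => A i j * g j := by
    intro i g
    apply summable_of_ne_finset_zero (s := {e i})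
    intro j hj
    simp only [Finset.mem_singleton] at hj
    simp [hA, hj]
  have htsum : ∀ i (g : ℕ → ℝ), ∑' j, A i j * g j = g (e i) := by
    intro i g
    have : (fun j => A i j * g j) = fun j => if j = e i then g (e i) else 0 := by
      funext j; by_cases h : j = e i <;> simp [hA, h]
    rw [this, tsum_ite_eq]
  have hT : IsToeplitz A := by
    refine ⟨?_, ⟨2, ?_⟩, ?_, ?_⟩
    · intro i
      apply summable_of_ne_finset_zero (s := {e i})
      intro j hj
      simp only [Finset.mem_singleton] at hj
      simp [hA, hj]
    · intro i
      have h1 : ∑' j, |A i j| = 1 := by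
        rw [tsum_congr (fun j => habs i j)]
        simpa using htsum i (fun _ => 1)
      rw [h1]; norm_num
    · have : ∀ i, ∑' j, A i j = 1 := by
        intro i; simpa using htsum i (fun _ => 1)
      simpa [this] using tendsto_const_nhds (α := ℝ) (f := atTop (α := ℕ))
    · intro j
      have : ∀ᶠ i in atTop, A i j = 0 := by
        have : ∀ᶠ i in atTop, j < e i := by
          have := hmono.tendsto_atTop.eventually_gt_atTop j
          exact this
        filter_upwards [this] with i hi
        simp [hA, Nat.ne_of_lt hi]
      exact Tendsto.congr' (this.mono fun i h => h.symm) tendsto_const_nhds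
  obtain ⟨f, hfF, hnal⟩ := hch A hT
  apply hnal
  have hval := htsum
  have hns := hcon f hfF
  rw [Splits, not_and_or] at hns
  have h01f := h01 f hfF
  cases hns with
  | inl h =>
    rw [Set.not_infinite] at h
    refine ⟨0, ?_⟩
    have hfin : {i | e i ∈ X ∩ {n | f n = 1}}.Finite := by
      apply Set.Finite.preimage _ h
      exact (Nat.nth_injective hpX).injOn
    obtain ⟨N, hN⟩ := hfin.bddAbove
    have hev : ∀ᶠ i in atTop, (fun i => ∑' j, A i j * f j) i = 0 := by
      filter_upwards [eventually_gt_atTop N] with i hi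
      rw [htsum i f]
      rcases h01f (e i) with h0 | h1
      · exact h0
      · exact absurd (hN ⟨hmem i, h1⟩) (not_le.2 hi)
    exact Tendsto.congr' (hev.mono fun i h => h.symm) tendsto_const_nhds
  | inr h =>
    rw [Set.not_infinite] at h
    refine ⟨1, ?_⟩
    have hfin : {i | e i ∈ X \ {n | f n = 1}}.Finite := by
      apply Set.Finite.preimage _ h
      exact (Nat.nth_injective hpX).injOn
    obtain ⟨N, hN⟩ := hfin.bddAbove
    have hev : ∀ᶠ i in atTop, (fun i => ∑' j, A i j * f j) i = 1 := by
      filter_upwards [eventually_gt_atTop N] with i hi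
      rw [htsum i f]
      by_contra hne
      exact absurd (hN ⟨hmem i, hne⟩) (not_le.2 hi)
    exact Tendsto.congr' (hev.mono fun i h => h.symm) tendsto_const_nhds

/-- Every witness for χ is (via characteristic functions) a splitting family;
hence 𝔰 ≤ χ. -/
theorem splitting_le_chi :
    (∀ F : Set (ℕ → ℝ), (∀ f ∈ F, ∀ n, f n = 0 ∨ f n = 1) →
      (∀ A : ℕ → ℕ → ℝ, IsToeplitz A → ∃ f ∈ F, ¬ ALimExists A f) →
      ∀ X : Set ℕ, X.Infinite → ∃ f ∈ F, Splits {n | f n = 1} X) ∧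
    splittingNumber ≤ chiNumber := by
  refine ⟨fun F h01 hch X hX => chi_witness_splits F h01 hch X hX, ?_⟩
  have hne : {c | ∃ F : Set (ℕ → ℝ), (∀ f ∈ F, ∀ n, f n = 0 ∨ f n = 1) ∧
      Cardinal.mk F = c ∧
      ∀ A : ℕ → ℕ → ℝ, IsToeplitz A → ∃ f ∈ F, ¬ ALimExists A f}.Nonempty := by
    refine ⟨Cardinal.mk {f : ℕ → ℝ | ∀ n, f n = 0 ∨ f n = 1},
      {f : ℕ → ℝ | ∀ n, f n = 0 ∨ f n = 1}, fun f hf => hf, rfl, ?_⟩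
    intro A hA
    obtain ⟨f, hf01, hbad⟩ := toeplitz_bad A hA
    exact ⟨f, hf01, hbad⟩
  have hmem : chiNumber ∈ {c | ∃ F : Set (ℕ → ℝ), (∀ f ∈ F, ∀ n, f n = 0 ∨ f n = 1) ∧
      Cardinal.mk F = c ∧
      ∀ A : ℕ → ℕ → ℝ, IsToeplitz A → ∃ f ∈ F, ¬ ALimExists A f} := csInf_mem hne
  obtain ⟨F, h01, hmk, hch⟩ := hmem
  have hmemS : Cardinal.mk ((fun f : ℕ → ℝ => {n | f n = 1}) '' F) ∈
      {c | ∃ S : Set (Set ℕ), Cardinal.mk S = c ∧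
        ∀ X : Set ℕ, X.Infinite → ∃ s ∈ S, Splits s X} := by
    refine ⟨(fun f : ℕ → ℝ => {n | f n = 1}) '' F, rfl, ?_⟩
    intro X hX
    obtain ⟨f, hf, hs⟩ := chi_witness_splits F h01 hch X hX
    exact ⟨{n | f n = 1}, ⟨f, hf, rfl⟩, hs⟩
  calc splittingNumber ≤ Cardinal.mk ((fun f : ℕ → ℝ => {n | f n = 1}) '' F) :=
        csInf_le' hmemS
    _ ≤ Cardinal.mk F := Cardinal.mk_image_le
    _ = chiNumber := hmk
end
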